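/- arXiv:math/9906087 — 3 statements merged into one kernel-verified Lean document; each statement's English description precedes it below -/
import Mathlib

section
/- Let G be a group and g_1,...,g_n elements of G such that the 'non-commutation graph' (vertices 1,...,n, with an edge between i and j iff g_i g_j ≠ g_j g_i) is a forest (acyclic). Then all products g_{σ(1)} g_{σ(2)} ··· g_{σ(n)} over permutations σ of {1,...,n} are conjugate in G. -/
open SimpleGraph List

section Graph

/-- In a finite acyclic graph, every nonempty finset of vertices contains a vertex with at
most one neighbor inside the finset. -/
lemma bourbaki_exists_leaf {V : Type*} [Fintype V] [DecidableEq V] {H : SimpleGraph V}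
    (hac : H.IsAcyclic) (I : Finset V) (hne : I.Nonempty) :
    ∃ i ∈ I, ∀ j ∈ I, ∀ k ∈ I, H.Adj i j → H.Adj i k → j = k := by
  by_contra hcon
  push_neg at hcon
  obtain ⟨i₀, hi₀⟩ := hne
  set S : Set ℕ := {k | ∃ (v : V) (p : H.Walk i₀ v), p.IsPath ∧ (∀ x ∈ p.support, x ∈ I)
    ∧ p.length = k} with hS
  have h0 : (0 : ℕ) ∈ S := ⟨i₀, Walk.nil, Walk.IsPath.nil, by simp [hi₀], rfl⟩
  have hbdd : BddAbove S := by
    refine ⟨Fintype.card V, ?_⟩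
    rintro k ⟨v, p, hp, -, rfl⟩
    exact le_of_lt hp.length_lt
  obtain ⟨v, p, hp, hsupp, hlen⟩ := Nat.sSup_mem ⟨0, h0⟩ hbdd
  have hmem : ∀ u ∈ I, H.Adj v u → u ∈ p.support := by
    intro u huI hadj
    by_contra hu
    have : (p.concat hadj).IsPath := by
      rw [← Walk.reverse_reverse (p.concat hadj)]
      apply Walk.IsPath.reverse
      rw [Walk.reverse_concat]
      exact hp.reverse.cons (by simpa [Walk.support_reverse] using hu)
    have hmemS : (p.concat hadj).length ∈ S := by
      refine ⟨u, _, this, ?_, rfl⟩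
      intro x hx
      rw [Walk.support_concat] at hx
      rw [List.mem_append, List.mem_singleton] at hx
      rcases hx with hx | rfl
      · exact hsupp x hx
      · exact huI
    have := le_csSup hbdd hmemS
    rw [Walk.length_concat, hlen] at this
    omega
  have hpen : ∀ u ∈ I, H.Adj v u → u = p.getVert (p.length - 1) := by
    intro u huI hadj
    have husupp : u ∈ p.support := hmem u huI hadj
    have huv : u ≠ v := hadj.ne'
    have hedge : (Walk.cons hadj.symm (Walk.nil : H.Walk v v)).IsPath := by
      simp [Walk.cons_isPath_iff, huv]
    have hdrop : (p.dropUntil u husupp).IsPath := hp.dropUntil husupp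
    have heq := hac.path_unique ⟨p.dropUntil u husupp, hdrop⟩ ⟨_, hedge⟩
    have hdeq : p.dropUntil u husupp = Walk.cons hadj.symm Walk.nil := congrArg Subtype.val heq
    have hlen1 : (p.dropUntil u husupp).length = 1 := by rw [hdeq]; simp
    have hspec := p.take_spec husupp
    have hlt : (p.takeUntil u husupp).length + 1 = p.length := by
      have := congrArg Walk.length hspec
      rwa [Walk.length_append, hlen1] at this
    have hgv := congrArg (fun q => Walk.getVert q (p.takeUntil u husupp).length) hspec
    rw [Walk.getVert_append] at hgv
    simp only [lt_irrefl, if_false, Nat.sub_self, Walk.getVert_zero] at hgv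
    rw [hgv]
    congr 1
    omega
  have hvI : v ∈ I := hsupp v p.end_mem_support
  obtain ⟨j, hjI, k, hkI, hadjj, hadjk, hjk⟩ := hcon v hvI
  exact hjk ((hpen j hjI hadjj).trans (hpen k hkI hadjk).symm)

end Graph

section Lists

variable {M : Type*} [Group M]

/-- `v` commutes with all elements of `m` except possibly one occurrence. -/
def BLP (v : M) (m : List M) : Prop :=
  (∀ z ∈ m, Commute v z) ∨ ∃ x w y, m = x ++ w :: y ∧ ∀ z ∈ x ++ y, Commute v z

lemma BLP_perm {v : M} {m m' : List M} (h : m.Perm m') (hl : BLP v m) : BLP v m' := by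
  rcases hl with hl | ⟨x, w, y, rfl, hcomm⟩
  · exact Or.inl fun z hz => hl z (h.symm.subset hz)
  · by_cases hvw : Commute v w
    · refine Or.inl fun z hz => ?_
      have hz' := h.symm.subset hz
      rw [List.mem_append, List.mem_cons] at hz'
      rcases hz' with hz' | hz' | hz'
      · exact hcomm z (List.mem_append_left _ hz')
      · exact hz' ▸ hvw
      · exact hcomm z (List.mem_append_right _ hz')
    · have hw : w ∈ m' := h.subset (by simp)
      obtain ⟨x', y', rfl⟩ := List.append_of_mem hw
      refine Or.inr ⟨x', w, y', rfl, ?_⟩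
      have hperm : (x' ++ y').Perm (x ++ y) :=
        ((List.perm_middle.symm.trans h.symm).trans List.perm_middle).cons_inv
      exact fun z hz => hcomm z (hperm.subset hz)

lemma BLP_mono {h w : M} {m : List M} (hd : ∀ z ∈ m, ¬Commute h z → ¬Commute w z)
    (hl : BLP w m) : BLP h m := by
  rcases hl with hl | ⟨x, W, y, rfl, hcomm⟩
  · refine Or.inl fun z hz => ?_
    by_contra hc
    exact hd z hz hc (hl z hz)
  · refine Or.inr ⟨x, W, y, rfl, fun z hz => ?_⟩
    by_contra hc
    have hz' : z ∈ x ++ W :: y := by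
      rw [List.mem_append] at hz
      rw [List.mem_append, List.mem_cons]
      tauto
    exact hd z hz' hc (hcomm z hz)

lemma BLP_head {v h w : M} {m : List M} (hc : ¬Commute v h → ¬Commute v w)
    (hl : BLP v (w :: m)) : BLP v (h :: m) := by
  rcases hl with hl | ⟨x, W, y, heq, hcomm⟩
  · refine Or.inl fun z hz => ?_
    rcases List.mem_cons.mp hz with rfl | hz
    · by_contra hch
      exact hc hch (hl w (by simp))
    · exact hl z (by simp [hz])
  · cases x with
    | nil =>
      rw [List.nil_append] at heq
      injection heq with h1 h2
      subst h2
      subst h1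
      refine Or.inr ⟨[], h, m, rfl, ?_⟩
      simpa using hcomm
    | cons a x =>
      rw [List.cons_append] at heq
      injection heq with h1 h2
      subst h1
      subst h2
      refine Or.inr ⟨h :: x, W, y, by simp, fun z hz => ?_⟩
      have hz' : z = h ∨ z ∈ x ++ y := by
        rw [List.cons_append, List.mem_cons] at hz
        exact hz
      rcases hz' with rfl | hz'
      · by_contra hch
        exact hc hch (hcomm w (by simp))
      · refine hcomm z ?_
        rw [List.cons_append, List.mem_cons, List.mem_append]
        rw [List.mem_append] at hz'
        tauto

/-- Hereditary leaf property: every nonempty sub-multiset has an element commuting with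
all but at most one of the others. -/
def BHF (l : List M) : Prop :=
  ∀ s : List M, s.Subperm l → s ≠ [] → ∃ v u, s.Perm (v :: u) ∧ BLP v u

lemma BHF_perm {l l' : List M} (h : l.Perm l') (hf : BHF l) : BHF l' :=
  fun s hs => hf s (hs.trans h.symm.subperm)

lemma BHF_subperm {s l : List M} (h : s.Subperm l) (hf : BHF l) : BHF s :=
  fun t ht => hf t (ht.trans h)

lemma BHF_mono {h w : M} {t : List M} (hd : ∀ z ∈ t, ¬Commute h z → ¬Commute w z)
    (hf : BHF (w :: t)) : BHF (h :: t) := by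
  intro s hs hne
  obtain ⟨r, hr, hrsub⟩ := hs
  rcases List.sublist_cons_iff.mp hrsub with hsub | ⟨r', rfl, hsub⟩
  · exact hf s ⟨r, hr, hsub.trans (List.sublist_cons_self w t)⟩ hne
  · obtain ⟨v₁, u₁, hperm, hlp⟩ := hf (w :: r') ((hsub.cons₂ w).subperm) (by simp)
    by_cases hv₁w : v₁ = w
    · subst hv₁w
      have hru : r'.Perm u₁ := hperm.cons_inv
      have hlp' : BLP v₁ r' := BLP_perm hru.symm hlp
      have hlp'' : BLP h r' := by
        refine BLP_mono (fun z hz hnc => ?_) hlp'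
        · exact hd z (hsub.subset hz) hnc
      exact ⟨h, r', hr.symm, hlp''⟩
    · have hwu : w ∈ u₁ := by
        have : w ∈ v₁ :: u₁ := hperm.subset (by simp)
        rcases List.mem_cons.mp this with h' | h'
        · exact absurd h'.symm hv₁w
        · exact h'
      obtain ⟨x, y, rfl⟩ := List.append_of_mem hwu
      have hru : r'.Perm (v₁ :: (x ++ y)) := by
        have step : (v₁ :: (x ++ w :: y)).Perm (w :: v₁ :: (x ++ y)) :=
          (List.perm_middle.cons v₁).trans (List.Perm.swap w v₁ _)
        exact (hperm.trans step).cons_inv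
      have hv₁r : v₁ ∈ r' := hru.symm.subset (by simp)
      have hv₁t : v₁ ∈ t := hsub.subset hv₁r
      have hlp1 : BLP v₁ (w :: (x ++ y)) := BLP_perm List.perm_middle hlp
      have hlp2 : BLP v₁ (h :: (x ++ y)) := by
        refine BLP_head (fun hch hcw => ?_) hlp1
        exact hd v₁ hv₁t (fun c => hch c.symm) hcw.symm
      refine ⟨v₁, h :: (x ++ y), ?_, hlp2⟩
      exact hr.symm.trans ((hru.cons h).trans (List.Perm.swap v₁ h _))

lemma bourbaki_decomp {v w : M} {m p q : List M} (h : m.Perm (p ++ w :: q))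
    (hc : ∀ z ∈ p ++ q, Commute v z) :
    ∃ P Q, m = P ++ w :: Q ∧ (∀ z ∈ P ++ Q, Commute v z) ∧ (P ++ Q).Perm (p ++ q) := by
  have hw : w ∈ m := h.symm.subset (by simp)
  obtain ⟨P, Q, rfl⟩ := List.append_of_mem hw
  have hperm : (P ++ Q).Perm (p ++ q) :=
    ((List.perm_middle.symm.trans h).trans List.perm_middle).cons_inv
  exact ⟨P, Q, rfl, fun z hz => hc z (hperm.subset hz), hperm⟩

lemma bourbaki_conj_step {v w : M} {x y P Q : List M}
    (hd : y ++ x = P ++ w :: Q) (hc : ∀ z ∈ P ++ Q, Commute v z) :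
    (x.prod * P.prod) * ((v * w) :: (Q ++ P)).prod * (x.prod * P.prod)⁻¹
      = (x ++ v :: y).prod := by
  have hPv : v * P.prod = P.prod * v :=
    (Commute.list_prod_right P v fun z hz => hc z (List.mem_append_left _ hz)).eq
  have hyx : y.prod * x.prod = P.prod * (w * Q.prod) := by
    have := congrArg List.prod hd
    simpa [List.prod_append, List.prod_cons] using this
  rw [List.prod_cons, List.prod_append, List.prod_append, List.prod_cons]
  calc x.prod * P.prod * (v * w * (Q.prod * P.prod)) * (x.prod * P.prod)⁻¹
      = x.prod * ((P.prod * v) * (w * Q.prod)) * x.prod⁻¹ := by group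
    _ = x.prod * ((v * P.prod) * (w * Q.prod)) * x.prod⁻¹ := by rw [hPv]
    _ = x.prod * v * (P.prod * (w * Q.prod)) * x.prod⁻¹ := by group
    _ = x.prod * v * (y.prod * x.prod) * x.prod⁻¹ := by rw [hyx]
    _ = x.prod * (v * y.prod) := by group

lemma bourbaki_main : ∀ N : ℕ, ∀ l l' : List M, l.length ≤ N → l.Perm l' → BHF l →
    ∃ c ∈ Subgroup.closure {a : M | a ∈ l}, c * l.prod * c⁻¹ = l'.prod := by
  intro N
  induction N with
  | zero =>
    intro l l' hlen hperm _
    have hl : l = [] := List.length_eq_zero_iff.mp (Nat.le_zero.mp hlen)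
    subst hl
    have : l' = [] := (hperm.nil_eq).symm
    subst this
    exact ⟨1, one_mem _, by simp⟩
  | succ N ih =>
    intro l l' hlen hperm hf
    rcases eq_or_ne l [] with rfl | hne
    · have : l' = [] := (hperm.nil_eq).symm
      subst this
      exact ⟨1, one_mem _, by simp⟩
    obtain ⟨v, u, hlv, hlp⟩ := hf l (List.Subperm.refl l) hne
    have hvmem : v ∈ l := hlv.mem_iff.mpr (by simp)
    obtain ⟨x, y, rfl⟩ := List.append_of_mem hvmem
    have hxyu : (x ++ y).Perm u := (List.perm_middle.symm.trans hlv).cons_inv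
    have hlpxy : BLP v (x ++ y) := BLP_perm hxyu.symm hlp
    have hvmem' : v ∈ l' := hperm.subset hvmem
    obtain ⟨x', y', rfl⟩ := List.append_of_mem hvmem'
    have hxy' : (x' ++ y').Perm (x ++ y) :=
      (List.perm_middle.symm.trans (hperm.symm.trans List.perm_middle)).cons_inv
    have hlen2 : (x ++ y).length ≤ N := by
      have h1 := hlen
      simp only [List.length_append, List.length_cons] at h1 ⊢
      omega
    have hfxy : BHF (x ++ y) :=
      BHF_subperm ⟨x ++ y, List.Perm.refl _, (List.sublist_cons_self v y).append_left x⟩ hf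
    have hsub_l : ∀ z ∈ y ++ x, z ∈ x ++ v :: y := by
      intro z hz
      rw [List.mem_append] at hz
      rw [List.mem_append, List.mem_cons]
      tauto
    by_cases hall : ∀ z ∈ x ++ y, Commute v z
    · have hall' : ∀ z ∈ x' ++ y', Commute v z := fun z hz => hall z (hxy'.subset hz)
      obtain ⟨c, hcmem, hc⟩ := ih (x ++ y) (x' ++ y') hlen2 hxy'.symm hfxy
      have hcent : v * c = c * v := by
        have hsubc : {a : M | a ∈ x ++ y} ⊆ (Subgroup.centralizer {v} : Subgroup M) := by
          intro z hz
          rw [SetLike.mem_coe, Subgroup.mem_centralizer_iff]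
          intro g hg
          rw [Set.mem_singleton_iff] at hg
          subst hg
          exact (hall z hz).eq
        have hmem := (Subgroup.closure_le _).mpr hsubc hcmem
        rw [Subgroup.mem_centralizer_iff] at hmem
        exact hmem v rfl
      refine ⟨c, ?_, ?_⟩
      · refine Subgroup.closure_mono ?_ hcmem
        intro a ha
        simp only [Set.mem_setOf_eq, List.mem_append, List.mem_cons] at ha ⊢
        tauto
      · have hl1 : (x ++ v :: y).prod = v * (x ++ y).prod := by
          rw [List.prod_append, List.prod_cons, List.prod_append]
          have hx : v * x.prod = x.prod * v :=
            (Commute.list_prod_right x v fun z hz =>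
              hall z (List.mem_append_left _ hz)).eq
          rw [← mul_assoc x.prod v, ← hx, mul_assoc]
        have hl2 : (x' ++ v :: y').prod = v * (x' ++ y').prod := by
          rw [List.prod_append, List.prod_cons, List.prod_append]
          have hx : v * x'.prod = x'.prod * v :=
            (Commute.list_prod_right x' v fun z hz =>
              hall' z (List.mem_append_left _ hz)).eq
          rw [← mul_assoc x'.prod v, ← hx, mul_assoc]
        rw [hl1, hl2, ← hc]
        calc c * (v * (x ++ y).prod) * c⁻¹
            = (c * v) * (x ++ y).prod * c⁻¹ := by group
          _ = (v * c) * (x ++ y).prod * c⁻¹ := by rw [hcent]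
          _ = v * (c * (x ++ y).prod * c⁻¹) := by group
    · have hstep0 : ∃ p w q, x ++ y = p ++ w :: q ∧ (∀ z ∈ p ++ q, Commute v z)
          ∧ ¬Commute v w := by
        rcases hlpxy with hl | ⟨p, w, q, hpq, hcomm⟩
        · exact absurd hl hall
        · refine ⟨p, w, q, hpq, hcomm, fun hvw => hall ?_⟩
          intro z hz
          rw [hpq, List.mem_append, List.mem_cons] at hz
          rcases hz with hz | hz | hz
          · exact hcomm z (List.mem_append_left _ hz)
          · exact hz ▸ hvw
          · exact hcomm z (List.mem_append_right _ hz)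
      obtain ⟨p, w, q, hpq, hcomm, hvw⟩ := hstep0
      have hwl : w ∈ x ++ y := by rw [hpq]; simp
      obtain ⟨P, Q, hdPQ, hcPQ, hpermPQ⟩ :=
        bourbaki_decomp (v := v) (m := y ++ x)
          (List.perm_append_comm.trans (by rw [hpq])) hcomm
      obtain ⟨P', Q', hdPQ', hcPQ', hpermPQ'⟩ :=
        bourbaki_decomp (v := v) (m := y' ++ x')
          (List.perm_append_comm.trans (hxy'.trans (by rw [hpq]))) hcomm
      have hstep : (x.prod * P.prod) * ((v * w) :: (Q ++ P)).prod * (x.prod * P.prod)⁻¹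
          = (x ++ v :: y).prod := bourbaki_conj_step hdPQ hcPQ
      have hstep' : (x'.prod * P'.prod) * ((v * w) :: (Q' ++ P')).prod
          * (x'.prod * P'.prod)⁻¹ = (x' ++ v :: y').prod := bourbaki_conj_step hdPQ' hcPQ'
      have hMM : ((v * w) :: (Q ++ P)).Perm ((v * w) :: (Q' ++ P')) := by
        refine List.Perm.cons _ ?_
        calc Q ++ P ~ P ++ Q := List.perm_append_comm
          _ ~ p ++ q := hpermPQ
          _ ~ P' ++ Q' := hpermPQ'.symm
          _ ~ Q' ++ P' := List.perm_append_comm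
      have hwQP : BHF (w :: (Q ++ P)) := by
        have h1 : (y ++ x).Perm (w :: (Q ++ P)) := by
          rw [hdPQ]
          exact List.perm_middle.trans (List.Perm.cons _ List.perm_append_comm)
        refine BHF_perm h1 (BHF_subperm ⟨x ++ y, List.perm_append_comm, ?_⟩ hf)
        exact (List.sublist_cons_self v y).append_left x
      have hfM : BHF ((v * w) :: (Q ++ P)) := by
        refine BHF_mono (fun z hz hnc hcwz => ?_) hwQP
        have hzPQ : z ∈ P ++ Q := by
          rw [List.mem_append] at hz ⊢
          tauto
        exact hnc ((hcPQ z hzPQ).mul_left hcwz)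
      have hlenM : ((v * w) :: (Q ++ P)).length ≤ N := by
        have h1 := congrArg List.length hdPQ
        have h2 := hlen
        simp only [List.length_append, List.length_cons] at h1 h2 ⊢
        omega
      obtain ⟨c₂, hc₂mem, hc₂⟩ := ih _ _ hlenM hMM hfM
      have hPsub : ∀ z ∈ P, z ∈ x ++ v :: y := by
        intro z hz
        exact hsub_l z (by rw [hdPQ, List.mem_append]; left; exact hz)
      have hQsub : ∀ z ∈ Q, z ∈ x ++ v :: y := by
        intro z hz
        refine hsub_l z ?_
        rw [hdPQ, List.mem_append, List.mem_cons]
        right; right; exact hz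
      have hP'sub : ∀ z ∈ P', z ∈ x' ++ v :: y' := by
        intro z hz
        rw [List.mem_append, List.mem_cons]
        have : z ∈ y' ++ x' := by rw [hdPQ', List.mem_append]; left; exact hz
        rw [List.mem_append] at this
        tauto
      have hc₁mem : x.prod * P.prod ∈ Subgroup.closure {a : M | a ∈ x ++ v :: y} := by
        refine mul_mem (Subgroup.list_prod_mem _ ?_) (Subgroup.list_prod_mem _ ?_)
        · exact fun z hz => Subgroup.subset_closure (by
            simp only [Set.mem_setOf_eq, List.mem_append]; left; exact hz)
        · exact fun z hz => Subgroup.subset_closure (hPsub z hz)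
      have hsetEq : {a : M | a ∈ x' ++ v :: y'} = {a : M | a ∈ x ++ v :: y} := by
        ext a
        simp only [Set.mem_setOf_eq]
        exact hperm.symm.mem_iff
      have hc₃mem : x'.prod * P'.prod ∈ Subgroup.closure {a : M | a ∈ x ++ v :: y} := by
        rw [← hsetEq]
        refine mul_mem (Subgroup.list_prod_mem _ ?_) (Subgroup.list_prod_mem _ ?_)
        · exact fun z hz => Subgroup.subset_closure (by
            simp only [Set.mem_setOf_eq, List.mem_append]; left; exact hz)
        · exact fun z hz => Subgroup.subset_closure (hP'sub z hz)
      have hc₂mem' : c₂ ∈ Subgroup.closure {a : M | a ∈ x ++ v :: y} := by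
        refine (Subgroup.closure_le _).mpr ?_ hc₂mem
        intro a ha
        simp only [Set.mem_setOf_eq, List.mem_cons] at ha
        rcases ha with rfl | ha
        · exact mul_mem (Subgroup.subset_closure (by simp))
            (Subgroup.subset_closure (by
              rw [Set.mem_setOf_eq, List.mem_append, List.mem_cons]
              rw [List.mem_append] at hwl
              tauto))
        · rw [List.mem_append] at ha
          rcases ha with ha | ha
          · exact Subgroup.subset_closure (hQsub a ha)
          · exact Subgroup.subset_closure (hPsub a ha)
      refine ⟨(x'.prod * P'.prod) * c₂ * (x.prod * P.prod)⁻¹,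
        mul_mem (mul_mem hc₃mem hc₂mem') (inv_mem hc₁mem), ?_⟩
      rw [← hstep, ← hstep', ← hc₂]
      group

end Lists

section Assembly

variable {n : ℕ} {M : Type*} [Group M]

lemma bourbaki_BHF_ofFn (g : Fin n → M) (H : SimpleGraph (Fin n))
    (hH : ∀ i j, H.Adj i j ↔ (i ≠ j ∧ g i * g j ≠ g j * g i))
    (hforest : H.IsAcyclic) : BHF (List.ofFn g) := by
  intro s hs hne
  obtain ⟨t, ht, htsub⟩ := hs
  rw [List.ofFn_eq_map] at htsub
  obtain ⟨I, hIsub, rfl⟩ := List.sublist_map_iff.mp htsub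
  have hInd : I.Nodup := hIsub.nodup (List.nodup_finRange n)
  have hIne : I ≠ [] := by
    rintro rfl
    exact hne ht.nil_eq.symm
  have hne' : I.toFinset.Nonempty := by
    obtain ⟨i, hi⟩ := List.exists_mem_of_ne_nil I hIne
    exact ⟨i, List.mem_toFinset.mpr hi⟩
  obtain ⟨i, hiI, hleaf⟩ := bourbaki_exists_leaf hforest I.toFinset hne'
  rw [List.mem_toFinset] at hiI
  obtain ⟨I₁, I₂, rfl⟩ := List.append_of_mem hiI
  have hs1 : s.Perm (g i :: (I₁ ++ I₂).map g) := by
    refine ht.symm.trans ?_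
    rw [List.map_append, List.map_cons, List.map_append]
    exact List.perm_middle
  refine ⟨g i, (I₁ ++ I₂).map g, hs1, ?_⟩
  by_cases hall : ∀ z ∈ (I₁ ++ I₂).map g, Commute (g i) z
  · exact Or.inl hall
  · push_neg at hall
    obtain ⟨z, hz, hnc⟩ := hall
    rw [List.mem_map] at hz
    obtain ⟨j, hjmem, rfl⟩ := hz
    have hij : i ≠ j := by
      rintro rfl
      exact hnc (Commute.refl _)
    have hadj : H.Adj i j := (hH i j).mpr ⟨hij, fun h => hnc h⟩
    obtain ⟨A, B, hab⟩ := List.append_of_mem hjmem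
    have hmap : (I₁ ++ I₂).map g = A.map g ++ g j :: B.map g := by
      rw [hab, List.map_append, List.map_cons]
    refine Or.inr ⟨A.map g, g j, B.map g, hmap, ?_⟩
    intro z hz
    have hz' : ∃ k, k ∈ A ++ B ∧ g k = z := by
      rw [List.mem_append, List.mem_map, List.mem_map] at hz
      rcases hz with ⟨k, hk, rfl⟩ | ⟨k, hk, rfl⟩
      · exact ⟨k, List.mem_append_left _ hk, rfl⟩
      · exact ⟨k, List.mem_append_right _ hk, rfl⟩
    obtain ⟨k, hk, rfl⟩ := hz'
    by_contra hnck
    have hki : i ≠ k := by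
      rintro rfl
      exact hnck (Commute.refl _)
    have hadjk : H.Adj i k := (hH i k).mpr ⟨hki, fun h => hnck h⟩
    have hkII : k ∈ I₁ ++ I₂ := by
      rw [hab, List.mem_append, List.mem_cons]
      rw [List.mem_append] at hk
      tauto
    have hkI : k ∈ I₁ ++ i :: I₂ := by
      rw [List.mem_append, List.mem_cons]
      rw [List.mem_append] at hkII
      tauto
    have hjI : j ∈ I₁ ++ i :: I₂ := by
      rw [List.mem_append, List.mem_cons]
      rw [List.mem_append] at hjmem
      tauto
    have hjeqk := hleaf j (List.mem_toFinset.mpr hjI) k (List.mem_toFinset.mpr hkI) hadj hadjk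
    have hndII : (I₁ ++ I₂).Nodup := ((List.sublist_cons_self i I₂).append_left I₁).nodup hInd
    have hjnot : j ∉ A ++ B := by
      rw [hab] at hndII
      exact (List.nodup_cons.mp ((List.perm_middle.nodup_iff).mp hndII)).1
    exact hjnot (hjeqk ▸ hk)

end Assembly

/-- Bourbaki's lemma: If the non-commutation graph of elements
`g 1, …, g n` of a group is a forest, then all products of the `g i` in any
order are conjugate. -/
theorem products_conjugate_of_noncommutation_forest
    (n : ℕ) (G : Type*) [Group G] (g : Fin n → G)
    (H : SimpleGraph (Fin n))
    (hH : ∀ i j, H.Adj i j ↔ (i ≠ j ∧ g i * g j ≠ g j * g i))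
    (hforest : H.IsAcyclic) :
    ∀ σ τ : Equiv.Perm (Fin n),
      IsConj ((List.ofFn (fun i => g (σ i))).prod)
             ((List.ofFn (fun i => g (τ i))).prod) := by
  intro σ τ
  have hperm : ∀ ρ : Equiv.Perm (Fin n),
      (List.ofFn (fun i => g (ρ i))).Perm (List.ofFn g) := by
    intro ρ
    have h2 : (List.ofFn (⇑ρ)).Perm (List.finRange n) := by
      apply List.perm_of_nodup_nodup_toFinset_eq
      · rw [List.ofFn_eq_map]
        exact (List.nodup_finRange n).map ρ.injective
      · exact List.nodup_finRange n
      · ext a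
        simp [List.mem_ofFn]
        exact ρ.surjective a
    calc List.ofFn (fun i => g (ρ i)) = List.map g (List.ofFn (⇑ρ)) :=
          (List.map_ofFn).symm
      _ ~ List.map g (List.finRange n) := h2.map g
      _ = List.ofFn g := List.ofFn_eq_map.symm
  have hf : BHF (List.ofFn g) := bourbaki_BHF_ofFn g H hH hforest
  have hfσ : BHF (List.ofFn fun i => g (σ i)) := BHF_perm (hperm σ).symm hf
  obtain ⟨c, -, hc⟩ := bourbaki_main (List.ofFn fun i => g (σ i)).length
    (List.ofFn fun i => g (σ i)) (List.ofFn fun i => g (τ i)) le_rfl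
    ((hperm σ).trans (hperm τ).symm) hfσ
  exact isConj_iff.mpr ⟨c, hc⟩
end

section
/- Let A be a tree on n vertices with bicolored vertex ordering as above, with Coxeter element C_A (product of the reflections R_i) and skew Coxeter element sC_A (product of the transvections T_i, taken in the same order). Then sC_A = -C_A as linear endomorphisms of R^n, when the reflections are taken in the bipartite order: first all R_i with i ≤ m, then all R_j with j > m. -/
namespace SkewCoxAux

variable {n : ℕ}

/-- matrix supported on row `i`, with that row given by `g i`. -/
def rowM (g : Fin n → Fin n → ℝ) (i : Fin n) : Matrix (Fin n) (Fin n) ℝ :=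
  Matrix.of fun k l => if k = i then g i l else 0

lemma rowM_mul_rowM (g : Fin n → Fin n → ℝ) (a b : Fin n) (h : g a b = 0) :
    rowM g a * rowM g b = 0 := by
  ext k l
  simp only [rowM, Matrix.mul_apply, Matrix.of_apply, Matrix.zero_apply]
  apply Finset.sum_eq_zero
  intro p _
  by_cases hk : k = a <;> by_cases hp : p = b <;> simp [hk, hp, h]

lemma rowM_mul_sum (g : Fin n → Fin n → ℝ) (a : Fin n) (L : List (Fin n))
    (h : ∀ j ∈ L, g a j = 0) :
    rowM g a * (L.map (rowM g)).sum = 0 := by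
  induction L with
  | nil => simp
  | cons b L ih =>
    simp only [List.map_cons, List.sum_cons, mul_add]
    rw [rowM_mul_rowM g a b (h b (by simp)), ih (fun j hj => h j (by simp [hj]))]
    simp

lemma prod_one_add (g : Fin n → Fin n → ℝ) (L : List (Fin n)) (hnd : L.Nodup)
    (h : ∀ i ∈ L, ∀ j ∈ L, i ≠ j → g i j = 0) :
    (L.map (fun i => 1 + rowM g i)).prod = 1 + (L.map (rowM g)).sum := by
  induction L with
  | nil => simp
  | cons a L ih =>
    simp only [List.map_cons, List.prod_cons, List.sum_cons]
    rw [ih hnd.of_cons (fun i hi j hj hij => h i (by simp [hi]) j (by simp [hj]) hij)]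
    have hz : rowM g a * (L.map (rowM g)).sum = 0 := by
      apply rowM_mul_sum
      intro j hj
      exact h a (by simp) j (by simp [hj])
        (fun e => (List.nodup_cons.1 hnd).1 (e ▸ hj))
    rw [add_mul, one_mul, mul_add, mul_one, hz, add_zero]
    abel

lemma sum_rowM (g : Fin n → Fin n → ℝ) (L : List (Fin n)) (hnd : L.Nodup) :
    (L.map (rowM g)).sum = Matrix.of fun k l => if k ∈ L then g k l else 0 := by
  induction L with
  | nil => ext k l; simp
  | cons a L ih =>
    ext k l
    rw [List.map_cons, List.sum_cons, Matrix.add_apply, ih hnd.of_cons]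
    simp only [rowM, Matrix.of_apply, List.mem_cons]
    by_cases hk : k = a
    · subst hk
      have : k ∉ L := (List.nodup_cons.1 hnd).1
      simp [this]
    · simp [hk]

lemma mem_take_finRange (t : ℕ) (k : Fin n) :
    k ∈ (List.finRange n).take t ↔ (k : ℕ) < t := by
  constructor
  · intro h
    obtain ⟨i, hi, he⟩ := List.mem_iff_getElem.1 h
    rw [List.getElem_take] at he
    rw [List.getElem_finRange] at he
    have : (k : ℕ) = i := by rw [← he]; rfl
    rw [List.length_take] at hi
    omega
  · intro h
    apply List.mem_iff_getElem.2
    refine ⟨(k : ℕ), ?_, ?_⟩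
    · rw [List.length_take, List.length_finRange]
      exact lt_min h k.isLt
    · rw [List.getElem_take, List.getElem_finRange]
      rfl

lemma mem_drop_finRange (t : ℕ) (k : Fin n) :
    k ∈ (List.finRange n).drop t ↔ t ≤ (k : ℕ) := by
  constructor
  · intro h
    obtain ⟨i, hi, he⟩ := List.mem_iff_getElem.1 h
    rw [List.getElem_drop, List.getElem_finRange] at he
    have : (k : ℕ) = t + i := by rw [← he]; rfl
    omega
  · intro h
    apply List.mem_iff_getElem.2
    refine ⟨(k : ℕ) - t, ?_, ?_⟩
    · rw [List.length_drop, List.length_finRange]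
      omega
    · rw [List.getElem_drop, List.getElem_finRange]
      apply Fin.ext
      simp
      omega

lemma ring_aux {A : Type*} [Ring A] (b1 b2 d : A)
    (h1 : b1 * d = -(d + d)) (h2 : d * b2 = 0) (h3 : d * d = d) :
    (1 + (b1 + (d + d))) * (1 + (-b2 - ((1 - d) + (1 - d)))) = -((1 + b1) * (1 + b2)) := by
  have e : (1 : A) + (-b2 - ((1 - d) + (1 - d))) = -1 - b2 + (d + d) := by abel
  rw [e]
  simp only [mul_add, add_mul, mul_sub, sub_mul, mul_one, one_mul, mul_neg, neg_mul,
    h1, h2, h3]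
  abel

end SkewCoxAux

open SkewCoxAux in
/-- For a bipartite-ordered tree, the skew Coxeter element
(product of the transvections in bipartite order) equals minus the Coxeter
element (product of the reflections in the same bipartite order). -/
theorem skew_coxeter_eq_neg_coxeter
    (n m : ℕ) (G : SimpleGraph (Fin n)) [DecidableRel G.Adj] (hT : G.IsTree)
    (hbip : ∀ i j, G.Adj i j → ((i : ℕ) < m ↔ ¬ (j : ℕ) < m))
    (q : Fin n → Fin n → ℝ)
    (hq : ∀ i j, q i j = if i = j then (-2 : ℝ) else if G.Adj i j then 1 else 0)
    (sq : Fin n → Fin n → ℝ)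
    (hsq : ∀ i j, sq i j =
      if G.Adj i j then
        (if (i : ℕ) < m ∧ m ≤ (j : ℕ) then (1 : ℝ)
         else if (j : ℕ) < m ∧ m ≤ (i : ℕ) then -1 else 0)
      else 0)
    (R : Fin n → Matrix (Fin n) (Fin n) ℝ)
    (hR : ∀ i k j, R i k j =
      (if k = j then (1 : ℝ) else 0) + (if k = i then q i j else 0))
    (T : Fin n → Matrix (Fin n) (Fin n) ℝ)
    (hTr : ∀ i k j, T i k j =
      (if k = j then (1 : ℝ) else 0) + (if k = i then sq i j else 0)) :
    ((List.finRange n).map T).prod = -(((List.finRange n).map R).prod) := by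
  classical
  set t := min m n with ht
  -- no same-part adjacency
  have hnadj : ∀ i j : Fin n, ((i : ℕ) < m ↔ (j : ℕ) < m) → ¬ G.Adj i j := by
    intro i j hiff hadj
    have := hbip i j hadj
    tauto
  -- rewrite T and R as 1 + rowM
  have hTeq : ∀ i : Fin n, T i = 1 + rowM sq i := by
    intro i; ext k j
    rw [hTr]
    simp [rowM, Matrix.one_apply, Matrix.add_apply]
  have hReq : ∀ i : Fin n, R i = 1 + rowM q i := by
    intro i; ext k j
    rw [hR]
    simp [rowM, Matrix.one_apply, Matrix.add_apply]
  rw [List.map_congr_left (fun a _ => hTeq a), List.map_congr_left (fun a _ => hReq a)]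
  -- split the list
  have hsplit : List.finRange n
      = (List.finRange n).take t ++ (List.finRange n).drop t :=
    (List.take_append_drop t (List.finRange n)).symm
  set L1 := (List.finRange n).take t with hL1
  set L2 := (List.finRange n).drop t with hL2
  have hnd : (List.finRange n).Nodup := List.nodup_finRange n
  have hnd1 : L1.Nodup := (List.take_sublist t _).nodup hnd
  have hnd2 : L2.Nodup := (List.drop_sublist t _).nodup hnd
  have hmem1 : ∀ k : Fin n, k ∈ L1 ↔ (k : ℕ) < m := by
    intro k
    rw [hL1, mem_take_finRange]
    omega
  have hmem2 : ∀ k : Fin n, k ∈ L2 ↔ ¬ (k : ℕ) < m := by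
    intro k
    rw [hL2, mem_drop_finRange]
    have := k.isLt
    omega
  rw [hsplit, List.map_append, List.map_append, List.prod_append, List.prod_append]
  -- products of each block
  have hq_zero1 : ∀ i ∈ L1, ∀ j ∈ L1, i ≠ j → q i j = 0 := by
    intro i hi j hj hij
    rw [hq, if_neg hij, if_neg (hnadj i j (by rw [(hmem1 i).1 hi |> iff_of_true]; exact (hmem1 j).1 hj))]
  have hq_zero2 : ∀ i ∈ L2, ∀ j ∈ L2, i ≠ j → q i j = 0 := by
    intro i hi j hj hij
    have h1 := (hmem2 i).1 hi
    have h2 := (hmem2 j).1 hj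
    rw [hq, if_neg hij, if_neg (hnadj i j (by tauto))]
  have hsq_zero1 : ∀ i ∈ L1, ∀ j ∈ L1, i ≠ j → sq i j = 0 := by
    intro i hi j hj hij
    have h1 := (hmem1 i).1 hi
    have h2 := (hmem1 j).1 hj
    rw [hsq, if_neg (hnadj i j (by tauto))]
  have hsq_zero2 : ∀ i ∈ L2, ∀ j ∈ L2, i ≠ j → sq i j = 0 := by
    intro i hi j hj hij
    have h1 := (hmem2 i).1 hi
    have h2 := (hmem2 j).1 hj
    rw [hsq, if_neg (hnadj i j (by tauto))]
  rw [prod_one_add sq L1 hnd1 hsq_zero1, prod_one_add sq L2 hnd2 hsq_zero2,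
      prod_one_add q L1 hnd1 hq_zero1, prod_one_add q L2 hnd2 hq_zero2,
      sum_rowM sq L1 hnd1, sum_rowM sq L2 hnd2, sum_rowM q L1 hnd1, sum_rowM q L2 hnd2]
  -- convert membership relations
  set P : Fin n → Prop := fun k => (k : ℕ) < m with hP
  have conv : ∀ (g : Fin n → Fin n → ℝ) (L : List (Fin n)) (Q : Fin n → Prop)
      [DecidablePred Q] (hm : ∀ k, k ∈ L ↔ Q k),
      (Matrix.of fun k l => if k ∈ L then g k l else 0)
        = Matrix.of fun k l => if Q k then g k l else 0 := by
    intro g L Q _ hm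
    ext k l
    by_cases h : Q k <;> simp [h, hm, Matrix.of_apply]
  rw [conv sq L1 P hmem1, conv sq L2 (fun k => ¬ P k) hmem2,
      conv q L1 P hmem1, conv q L2 (fun k => ¬ P k) hmem2]
  -- now pure matrix identity
  set A1 : Matrix (Fin n) (Fin n) ℝ := Matrix.of fun k l => if P k then sq k l else 0 with hA1
  set A2 : Matrix (Fin n) (Fin n) ℝ := Matrix.of fun k l => if ¬ P k then sq k l else 0 with hA2
  set B1 : Matrix (Fin n) (Fin n) ℝ := Matrix.of fun k l => if P k then q k l else 0 with hB1
  set B2 : Matrix (Fin n) (Fin n) ℝ := Matrix.of fun k l => if ¬ P k then q k l else 0 with hB2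
  set D1 : Matrix (Fin n) (Fin n) ℝ := Matrix.diagonal (fun k => if P k then 1 else 0) with hD1
  set D2 : Matrix (Fin n) (Fin n) ℝ := Matrix.diagonal (fun k => if ¬ P k then 1 else 0) with hD2
  have hDsum : D1 + D2 = 1 := by
    ext k l
    by_cases hkl : k = l
    · subst hkl
      by_cases h : P k <;>
        simp [hD1, hD2, Matrix.diagonal, Matrix.one_apply, h, Matrix.of_apply]
    · simp [hD1, hD2, Matrix.diagonal, Matrix.one_apply, hkl, Matrix.of_apply]
  have hD1sq : D1 * D1 = D1 := by
    ext k l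
    rw [hD1, Matrix.diagonal_mul]
    by_cases h : P k <;> simp [Matrix.diagonal, h, Matrix.of_apply]
  have hD1B2 : D1 * B2 = 0 := by
    ext k l
    rw [hD1, Matrix.diagonal_mul]
    by_cases h : P k <;> simp [hB2, h, Matrix.of_apply]
  have hB1D1 : B1 * D1 = -(D1 + D1) := by
    ext k l
    rw [Matrix.neg_apply, Matrix.add_apply, hD1, Matrix.mul_diagonal]
    by_cases hl : P l
    · by_cases hkl : k = l
      · subst hkl
        have hl' : (k : ℕ) < m := hl
        simp [hB1, hl, hq, Matrix.diagonal, Matrix.of_apply]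
        norm_num
      · by_cases hk : P k
        · have : ¬ G.Adj k l := hnadj k l (by tauto)
          simp [hB1, hk, hl, hq, hkl, this, Matrix.diagonal, Matrix.of_apply]
        · simp [hB1, hk, hl, hkl, Matrix.diagonal, Matrix.of_apply]
    · have hkl : k ≠ l ∨ k = l := (em (k = l)).symm
      rcases hkl with hkl | hkl
      · simp [hl, hkl, Matrix.diagonal, Matrix.of_apply]
      · subst hkl
        simp [hB1, hl, Matrix.diagonal, Matrix.of_apply]
  have hA1eq : A1 = B1 + (D1 + D1) := by
    ext k l
    by_cases hk : P k
    · by_cases hkl : k = l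
      · subst hkl
        have : ¬ G.Adj k k := G.irrefl
        simp [hA1, hB1, hD1, hk, hsq, hq, this, Matrix.diagonal, Matrix.of_apply]
        norm_num
      · by_cases hadj : G.Adj k l
        · have hl : ¬ P l := by have := hbip k l hadj; tauto
          have hk' : (k : ℕ) < m := hk
          have hml : m ≤ (l : ℕ) := not_lt.1 hl
          simp [hA1, hB1, hD1, hk, hk', hsq, hq, hadj, hkl, hml, Matrix.diagonal, Matrix.of_apply]
        · simp [hA1, hB1, hD1, hk, hsq, hq, hadj, hkl, Matrix.diagonal, Matrix.of_apply]
    · simp [hA1, hB1, hD1, hk, Matrix.diagonal, Matrix.of_apply]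
  have hA2eq : A2 = -B2 - (D2 + D2) := by
    ext k l
    by_cases hk : P k
    · simp [hA2, hB2, hD2, hk, Matrix.diagonal, Matrix.of_apply]
    · by_cases hkl : k = l
      · subst hkl
        have : ¬ G.Adj k k := G.irrefl
        simp [hA2, hB2, hD2, hk, hsq, hq, this, Matrix.diagonal, Matrix.of_apply]
        norm_num
      · by_cases hadj : G.Adj k l
        · have hl : P l := by have := hbip k l hadj; tauto
          have hl' : (l : ℕ) < m := hl
          have hmk : m ≤ (k : ℕ) := not_lt.1 hk
          have hnk : ¬ ((k:ℕ) < m ∧ m ≤ (l:ℕ)) := by omega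
          simp [hA2, hB2, hD2, hk, hsq, hq, hadj, hkl, hl', hmk, hnk, Matrix.diagonal, Matrix.of_apply]
        · simp [hA2, hB2, hD2, hk, hsq, hq, hadj, hkl, Matrix.diagonal, Matrix.of_apply]
  -- final algebra
  have hD2eq : D2 = 1 - D1 := by rw [← hDsum]; abel
  rw [hA1eq, hA2eq, hD2eq]
  exact ring_aux B1 B2 D1 hB1D1 hD1B2 hD1sq
end

section
/- The characteristic polynomial of the Coxeter element of the tree E_10 (the tree obtained from the Dynkin diagram E_8 by lengthening the long arm by two vertices; i.e., a path of 9 vertices with one extra vertex attached to the third vertex from one end) is Lehmer's polynomial x^10 + x^9 - x^7 - x^6 - x^5 - x^4 - x^3 + x + 1, which has a real root strictly greater than 1. -/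
set_option maxRecDepth 8000

open Polynomial

/-- The tree `E₁₀`: a path `u₁, …, u₉` (indices `0, …, 8`) together with an
extra vertex (index `9`) attached to the third vertex (index `2`). -/
def e10Adj (i j : Fin 10) : Bool :=
  ((i : ℕ) + 1 == (j : ℕ) && (j : ℕ) ≤ 8) ||
  ((j : ℕ) + 1 == (i : ℕ) && (i : ℕ) ≤ 8) ||
  ((i : ℕ) == 2 && (j : ℕ) == 9) || ((i : ℕ) == 9 && (j : ℕ) == 2)

def qz (i j : Fin 10) : ℤ := if i = j then -2 else if e10Adj i j then 1 else 0

def Az (i : Fin 10) : Matrix (Fin 10) (Fin 10) ℤ :=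
  Matrix.of fun k j => (if k = j then 1 else 0) + (if k = i then qz i j else 0)

def Mz : Matrix (Fin 10) (Fin 10) ℤ := Matrix.of ![![0,-1,1,0,0,0,0,0,0,0],![1,-1,1,0,0,0,0,0,0,0],![1,-1,2,-1,1,0,0,0,0,-1],![0,0,1,-1,1,0,0,0,0,0],![0,0,1,-1,1,-1,1,0,0,0],![0,0,0,0,1,-1,1,0,0,0],![0,0,0,0,1,-1,1,-1,1,0],![0,0,0,0,0,0,1,-1,1,0],![0,0,0,0,0,0,1,-1,0,0],![0,0,1,0,0,0,0,0,0,-1]]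

lemma prodAz : (([0, 2, 4, 6, 8, 1, 3, 5, 7, 9] : List (Fin 10)).map Az).prod = Mz := by
  decide

def Nz (x : ℤ) : Matrix (Fin 10) (Fin 10) ℤ :=
  Matrix.of fun i j => (if i = j then x else 0) - Mz i j

noncomputable def pz : ℤ[X] := X ^ 10 + X ^ 9 - X ^ 7 - X ^ 6 - X ^ 5 - X ^ 4 - X ^ 3 + X + 1

lemma lowerTri {M : Matrix (Fin 10) (Fin 10) ℤ}
    (h : ∀ i j : Fin 10, i < j → M i j = 0) :
    M.BlockTriangular OrderDual.toDual := fun i j hij => h i j hij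

lemma upperTri {M : Matrix (Fin 10) (Fin 10) ℤ}
    (h : ∀ i j : Fin 10, j < i → M i j = 0) :
    M.BlockTriangular id := fun i j hij => h i j hij

lemma eval_charpoly_Mz (x : ℤ) : (Mz.charpoly).eval x = (Nz x).det := by
  rw [Matrix.charpoly, ← Polynomial.coe_evalRingHom, RingHom.map_det]
  congr 1
  ext i j
  by_cases h : i = j <;>
    simp [h, Matrix.charmatrix_apply, Nz, Matrix.diagonal_apply,
      RingHom.mapMatrix_apply, Matrix.map_apply]



lemma detAux {n : Type*} [DecidableEq n] [Fintype n] [LinearOrder n]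
    (A B M : Matrix n n ℤ) (k dA dB v : ℤ)
    (hAB : A * B = k • M)
    (hA : A.BlockTriangular OrderDual.toDual) (hB : B.BlockTriangular id)
    (hdA : ∏ i, A i i = dA) (hdB : ∏ i, B i i = dB)
    (hk : k ≠ 0) (hcard : Fintype.card n = 10)
    (hv : dA * dB = k ^ 10 * v) :
    M.det = v := by
  have h1 : (A * B).det = (k • M).det := by rw [hAB]
  rw [Matrix.det_mul, Matrix.det_smul, Matrix.det_of_lowerTriangular A hA,
      Matrix.det_of_upperTriangular hB, hdA, hdB, hcard] at h1
  exact (mul_left_cancel₀ (pow_ne_zero 10 hk) (hv.symm.trans h1)).symm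


def L1 : Matrix (Fin 10) (Fin 10) ℤ := Matrix.of ![![990,0,0,0,0,0,0,0,0,0],![-990,990,0,0,0,0,0,0,0,0],![-990,660,990,0,0,0,0,0,0,0],![0,0,1485,990,0,0,0,0,0,0],![0,0,1485,-990,990,0,0,0,0,0],![0,0,0,0,-495,990,0,0,0,0],![0,0,0,0,-495,594,990,0,0,0],![0,0,0,0,0,0,-2475,990,0,0],![0,0,0,0,0,0,-2475,770,990,0],![0,0,1485,-2970,1485,-594,1485,-330,270,990]]
def U1 : Matrix (Fin 10) (Fin 10) ℤ := Matrix.of ![![990,990,-990,0,0,0,0,0,0,0],![0,2970,-1980,0,0,0,0,0,0,0],![0,0,-660,990,-990,0,0,0,0,990],![0,0,0,495,495,0,0,0,0,-1485],![0,0,0,0,1980,990,-990,0,0,-2970],![0,0,0,0,0,2475,-1485,0,0,-1485],![0,0,0,0,0,0,396,990,-990,-594],![0,0,0,0,0,0,0,4455,-3465,-1485],![0,0,0,0,0,0,0,0,1210,-330],![0,0,0,0,0,0,0,0,0,90]]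

lemma det1 : (Nz 1).det = -1 := by
  have hAB : L1 * U1 = (980100 : ℤ) • Nz 1 := by decide
  have hdA : ∏ i, L1 i i = 904382075008804490010000000000 := by decide
  have hdB : ∏ i, U1 i i = -904382075008804490010000000000 := by decide
  have hv : (904382075008804490010000000000 : ℤ) * -904382075008804490010000000000 = (980100 : ℤ) ^ 10 * (-1) := by norm_num
  apply detAux L1 U1 (Nz 1) 980100 _ _ _ hAB (lowerTri (by intro i; fin_cases i <;> decide))
    (upperTri (by intro i; fin_cases i <;> decide)) hdA hdB (by norm_num) (by simp) hv


def L2 : Matrix (Fin 10) (Fin 10) ℤ := Matrix.of ![![206360,0,0,0,0,0,0,0,0,0],![-103180,206360,0,0,0,0,0,0,0,0],![-103180,88440,206360,0,0,0,0,0,0,0],![0,0,-1444520,206360,0,0,0,0,0,0],![0,0,-1444520,165088,206360,0,0,0,0,0],![0,0,0,0,-515900,206360,0,0,0,0],![0,0,0,0,-515900,131320,206360,0,0,0],![0,0,0,0,0,0,-283745,206360,0,0],![0,0,0,0,0,0,-283745,112024,206360,0],![0,0,-1444520,144452,-722260,131320,-361130,82544,-86240,206360]]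
def U2 : Matrix (Fin 10) (Fin 10) ℤ := Matrix.of ![![412720,206360,-206360,0,0,0,0,0,0,0],![0,722260,-309540,0,0,0,0,0,0,0],![0,0,29480,206360,-206360,0,0,0,0,206360],![0,0,0,2063600,-1650880,0,0,0,0,1444520],![0,0,0,0,82544,206360,-206360,0,0,288904],![0,0,0,0,0,1134980,-722260,0,0,722260],![0,0,0,0,0,0,150080,206360,-206360,262640],![0,0,0,0,0,0,0,902825,-490105,361130],![0,0,0,0,0,0,0,0,395032,165088],![0,0,0,0,0,0,0,0,0,1988140]]

lemma det2 : (Nz 2).det = 1291 := by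
  have hAB : L2 * U2 = (42584449600 : ℤ) • Nz 2 := by decide
  have hdA : ∏ i, L2 i i = 140040996360565995870782243665314897209589760000000000 := by decide
  have hdB : ∏ i, U2 i i = 180792926301490700669179876571921532297580380160000000000 := by decide
  have hv : (140040996360565995870782243665314897209589760000000000 : ℤ) * 180792926301490700669179876571921532297580380160000000000 = (42584449600 : ℤ) ^ 10 * (1291) := by norm_num
  apply detAux L2 U2 (Nz 2) 42584449600 _ _ _ hAB (lowerTri (by intro i; fin_cases i <;> decide))
    (upperTri (by intro i; fin_cases i <;> decide)) hdA hdB (by norm_num) (by simp) hv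


def L3 : Matrix (Fin 10) (Fin 10) ℤ := Matrix.of ![![14436549273510,0,0,0,0,0,0,0,0,0],![-4812183091170,14436549273510,0,0,0,0,0,0,0,0],![-4812183091170,4442015161080,14436549273510,0,0,0,0,0,0,0],![0,0,-13405367182545,14436549273510,0,0,0,0,0,0],![0,0,-13405367182545,5649084498330,14436549273510,0,0,0,0,0],![0,0,0,0,-7905729364065,14436549273510,0,0,0,0],![0,0,0,0,-7905729364065,4912961794650,14436549273510,0,0,0],![0,0,0,0,0,0,-7294658495345,14436549273510,0,0],![0,0,0,0,0,0,-7294658495345,4823485928730,14436549273510,0],![0,0,-13405367182545,2719929573270,-4468455727515,982592358930,-1489485242505,330607998630,-330867045054,14436549273510]]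
def U3 : Matrix (Fin 10) (Fin 10) ℤ := Matrix.of ![![43309647820530,14436549273510,-14436549273510,0,0,0,0,0,0,0],![0,62558380185210,-19248732364680,0,0,0,0,0,0,0],![0,0,15547053063780,14436549273510,-14436549273510,0,0,0,0,14436549273510],![0,0,0,71151564276585,-27841916456055,0,0,0,0,13405367182545],![0,0,0,0,26362394325540,14436549273510,-14436549273510,0,0,8159788719810],![0,0,0,0,0,65651926458105,-22342278637575,0,0,4468455727515],![0,0,0,0,0,0,28570762436580,14436549273510,-14436549273510,2947777076790],![0,0,0,0,0,0,0,65040855589385,-21731207768855,1489485242505],![0,0,0,0,0,0,0,0,43275739307850,991823995890],![0,0,0,0,0,0,0,0,0,71140185251226]]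

lemma det3 : (Nz 3).det = 75469 := by
  have hAB : L3 * U3 = (208413954926482108787720100 : ℤ) • Nz 3 := by decide
  have hdA : ∏ i, L3 i i = 393218529618285477529869508367630568923240952141221701645749876482599168420895301286128385037505528953267715201327177860010000000000 := by decide
  have hdB : ∏ i, U3 i i = 29675809211762386703701721926996711406068071417145860601503097428265276641556547492762823090395504764574161198528960785917094690000000000 := by decide
  have hv : (393218529618285477529869508367630568923240952141221701645749876482599168420895301286128385037505528953267715201327177860010000000000 : ℤ) * 29675809211762386703701721926996711406068071417145860601503097428265276641556547492762823090395504764574161198528960785917094690000000000 = (208413954926482108787720100 : ℤ) ^ 10 * (75469) := by norm_num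
  apply detAux L3 U3 (Nz 3) 208413954926482108787720100 _ _ _ hAB (lowerTri (by intro i; fin_cases i <;> decide))
    (upperTri (by intro i; fin_cases i <;> decide)) hdA hdB (by norm_num) (by simp) hv


def L4 : Matrix (Fin 10) (Fin 10) ℤ := Matrix.of ![![128597314904307648,0,0,0,0,0,0,0,0,0],![-32149328726076912,128597314904307648,0,0,0,0,0,0,0,0],![-32149328726076912,30618408310549440,128597314904307648,0,0,0,0,0,0,0],![0,0,-62803339836987456,128597314904307648,0,0,0,0,0,0],![0,0,-62803339836987456,34873848109642752,128597314904307648,0,0,0,0,0],![0,0,0,0,-44111869647407856,128597314904307648,0,0,0,0],![0,0,0,0,-44111869647407856,32324243463433152,128597314904307648,0,0,0],![0,0,0,0,0,0,-42943652760559131,128597314904307648,0,0],![0,0,0,0,0,0,-42943652760559131,32160279515887552,128597314904307648,0],![0,0,-62803339836987456,11442981410976528,-15700834959246864,2938567587584832,-3925208739811716,735893075275008,-735955746075648,128597314904307648]]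
def U4 : Matrix (Fin 10) (Fin 10) ℤ := Matrix.of ![![514389259617230592,128597314904307648,-128597314904307648,0,0,0,0,0,0,0],![0,675135903247615152,-160746643630384560,0,0,0,0,0,0,0],![0,0,263318311470725184,128597314904307648,-128597314904307648,0,0,0,0,128597314904307648],![0,0,0,705789914358525696,-191400654741295104,0,0,0,0,62803339836987456],![0,0,0,0,374893867178659584,128597314904307648,-128597314904307648,0,0,45771925643906112],![0,0,0,0,0,687098444168946096,-172709184551715504,0,0,15700834959246864],![0,0,0,0,0,0,385092285763497984,128597314904307648,-128597314904307648,11754270350339328],![0,0,0,0,0,0,0,685930227282097371,-171540967664866779,3925208739811716],![0,0,0,0,0,0,0,0,514345456457988032,2943572301100032],![0,0,0,0,0,0,0,0,0,705784298417149392]]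

lemma det4 : (Nz 4).det = 1288901 := by
  have hAB : L4 * U4 = (16537269400597665942687266231291904 : ℤ) • Nz 4 := by decide
  have hdA : ∏ i, L4 i i = 1236855619839998125160540492725455911934878676973227827252770741403398012543449513989468321380842977670195071444820005636768552807547560735352963362740301867131341084033024 := by decide
  have hdB : ∏ i, U4 i i = 1594184445267393423517545801614332850348777061629470319773923461365581101765264622030539708896089894762092097780299950085236624482200858579357169831199337816847452654551248666624 := by decide
  have hv : (1236855619839998125160540492725455911934878676973227827252770741403398012543449513989468321380842977670195071444820005636768552807547560735352963362740301867131341084033024 : ℤ) * 1594184445267393423517545801614332850348777061629470319773923461365581101765264622030539708896089894762092097780299950085236624482200858579357169831199337816847452654551248666624 = (16537269400597665942687266231291904 : ℤ) ^ 10 * (1288901) := by norm_num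
  apply detAux L4 U4 (Nz 4) 16537269400597665942687266231291904 _ _ _ hAB (lowerTri (by intro i; fin_cases i <;> decide))
    (upperTri (by intro i; fin_cases i <;> decide)) hdA hdB (by norm_num) (by simp) hv


def L5 : Matrix (Fin 10) (Fin 10) ℤ := Matrix.of ![![110815581835128504250,0,0,0,0,0,0,0,0,0],![-22163116367025700850,110815581835128504250,0,0,0,0,0,0,0,0],![-22163116367025700850,21448177129379710500,110815581835128504250,0,0,0,0,0,0,0],![0,0,-36545564222223230125,110815581835128504250,0,0,0,0,0,0],![0,0,-36545564222223230125,23280584419144643750,110815581835128504250,0,0,0,0,0],![0,0,0,0,-28057562209319770225,110815581835128504250,0,0,0,0],![0,0,0,0,-28057562209319770225,22208362606631741750,110815581835128504250,0,0,0],![0,0,0,0,0,0,-27718042128803631829,110815581835128504250,0,0],![0,0,0,0,0,0,-27718042128803631829,22164927103803191750,110815581835128504250,0],![0,0,-36545564222223230125,5773584935947871650,-7309112844444646025,1168861189822723250,-1461822568888929205,233886833759241250,-233890655554018750,110815581835128504250]]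
def U5 : Matrix (Fin 10) (Fin 10) ℤ := Matrix.of ![![554077909175642521250,110815581835128504250,-110815581835128504250,0,0,0,0,0,0,0],![0,687056607377796726350,-132978698202154205100,0,0,0,0,0,0,0],![0,0,336021441693615464500,110815581835128504250,-110815581835128504250,0,0,0,0,110815581835128504250],![0,0,0,701439055232994255625,-147361146057351734375,0,0,0,0,36545564222223230125],![0,0,0,0,437674987079919302500,110815581835128504250,-110815581835128504250,0,0,28867924679739358250],![0,0,0,0,0,692951053220090795725,-138873144044448274475,0,0,7309112844444646025],![0,0,0,0,0,0,443036096142483812500,110815581835128504250,-110815581835128504250,5844305949113616250],![0,0,0,0,0,0,0,692611533139574657329,-138533623963932136079,1461822568888929205],![0,0,0,0,0,0,0,0,554068855491755066750,1169434168796206250],![0,0,0,0,0,0,0,0,0,701438438159775347150]]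

lemma det5 : (Nz 5).det = 11621131 := by
  have hAB : L5 * U5 = (12280093177458062513689057110842268062500 : ℤ) • Nz 5 := by decide
  have hdA : ∏ i, L5 i i = 279259727905744585705715235868349446739300454331366544379664030493464446801265047221288549356651906105852795523783006527792279124817911556644793583848411243729780920534714203309059143066406250000000000 := by decide
  have hdB : ∏ i, U5 i i = 3245313881017013483026844204721987674334933428144328021253389434352544980120032079479780220873617522255815203498095934433329216498074301346183066705861871205256712678834503804215209788322448730468750000000000 := by decide
  have hv : (279259727905744585705715235868349446739300454331366544379664030493464446801265047221288549356651906105852795523783006527792279124817911556644793583848411243729780920534714203309059143066406250000000000 : ℤ) * 3245313881017013483026844204721987674334933428144328021253389434352544980120032079479780220873617522255815203498095934433329216498074301346183066705861871205256712678834503804215209788322448730468750000000000 = (12280093177458062513689057110842268062500 : ℤ) ^ 10 * (11621131) := by norm_num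
  apply detAux L5 U5 (Nz 5) 12280093177458062513689057110842268062500 _ _ _ hAB (lowerTri (by intro i; fin_cases i <;> decide))
    (upperTri (by intro i; fin_cases i <;> decide)) hdA hdB (by norm_num) (by simp) hv


def L6 : Matrix (Fin 10) (Fin 10) ℤ := Matrix.of ![![25355718739688065957800,0,0,0,0,0,0,0,0,0],![-4225953123281344326300,25355718739688065957800,0,0,0,0,0,0,0,0],![-4225953123281344326300,4127675143670150272200,25355718739688065957800,0,0,0,0,0,0,0],![0,0,-6302288472870444139800,25355718739688065957800,0,0,0,0,0,0],![0,0,-6302288472870444139800,4367492223104164471200,25355718739688065957800,0,0,0,0,0],![0,0,0,0,-5105342212519080717900,25355718739688065957800,0,0,0,0],![0,0,0,0,-5105342212519080717900,4229910537577393745736,25355718739688065957800,0,0,0],![0,0,0,0,0,0,-5072093705287098400625,25355718739688065957800,0,0],![0,0,0,0,0,0,-5072093705287098400625,4226063071476530255400,25355718739688065957800,0],![0,0,-6302288472870444139800,869454470340180890100,-1050381412145074023300,145858984054392887784,-175063568690845670550,24314258021116892400,-24314363453757405600,25355718739688065957800]]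
def U6 : Matrix (Fin 10) (Fin 10) ℤ := Matrix.of ![![152134312438128395746800,25355718739688065957800,-25355718739688065957800,0,0,0,0,0,0,0],![0,181715984301097806030900,-29581671862969410284100,0,0,0,0,0,0,0],![0,0,102012542836419428155800,25355718739688065957800,-25355718739688065957800,0,0,0,0,25355718739688065957800],![0,0,0,183792319650686905844400,-31658007212558510097600,0,0,0,0,6302288472870444139800],![0,0,0,0,125929359099503408919600,25355718739688065957800,-25355718739688065957800,0,0,5216726822041085340600],![0,0,0,0,0,182595373390335542422500,-30461060952207146675700,0,0,1050381412145074023300],![0,0,0,0,0,0,126754849212664033272384,25355718739688065957800,-25355718739688065957800,875153904326357326704],![0,0,0,0,0,0,0,182562124883103560105225,-30427812444975164358425,175063568690845670550],![0,0,0,0,0,0,0,0,152133652748957280172200,145885548126701354400],![0,0,0,0,0,0,0,0,0,183792291671730887016300]]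

lemma det6 : (Nz 6).det = 70207999 := by
  have hAB : L6 * U6 = (642912472806168563921188321190683231380840000 : ℤ) • Nz 6 := by decide
  have hdA : ∏ i, L6 i i = 109839679449635889007230536001594553289672085257916677475851101245480471020102804117054204447597645502277496778737900322625647727531624881879242335051974537442222954256590134625444429192254754361170595942400000000000000000000 := by decide
  have hdB : ∏ i, U6 i i = 7711624104960357045783752464369414395766744472115728834307876640391591663898906651347337468802731047826252991564133727113001153028892592175352963980086693272769051730223725915193067859285392601934310838753423257600000000000000000000 := by decide
  have hv : (109839679449635889007230536001594553289672085257916677475851101245480471020102804117054204447597645502277496778737900322625647727531624881879242335051974537442222954256590134625444429192254754361170595942400000000000000000000 : ℤ) * 7711624104960357045783752464369414395766744472115728834307876640391591663898906651347337468802731047826252991564133727113001153028892592175352963980086693272769051730223725915193067859285392601934310838753423257600000000000000000000 = (642912472806168563921188321190683231380840000 : ℤ) ^ 10 * (70207999) := by norm_num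
  apply detAux L6 U6 (Nz 6) 642912472806168563921188321190683231380840000 _ _ _ hAB (lowerTri (by intro i; fin_cases i <;> decide))
    (upperTri (by intro i; fin_cases i <;> decide)) hdA hdB (by norm_num) (by simp) hv


def L7 : Matrix (Fin 10) (Fin 10) ℤ := Matrix.of ![![482823173348468410127670,0,0,0,0,0,0,0,0,0],![-68974739049781201446810,482823173348468410127670,0,0,0,0,0,0,0,0],![-68974739049781201446810,67764655908556969842480,482823173348468410127670,0,0,0,0,0,0,0],![0,0,-96226996086932515305165,482823173348468410127670,0,0,0,0,0,0],![0,0,-96226996086932515305165,70621896997238662973898,482823173348468410127670,0,0,0,0,0],![0,0,0,0,-80792089446422036659725,482823173348468410127670,0,0,0,0],![0,0,0,0,-80792089446422036659725,69008486093533770073290,482823173348468410127670,0,0,0],![0,0,0,0,0,0,-80477091351717741177165,482823173348468410127670,0,0],![0,0,0,0,0,0,-80477091351717741177165,68975427819978981158858,482823173348468410127670,0],![0,0,-96226996086932515305165,11736000375634413380502,-13746713726704645043595,1683133807159360245690,-1963816246672092149085,240466895299841968758,-240467238337783086630,482823173348468410127670]]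
def U7 : Matrix (Fin 10) (Fin 10) ℤ := Matrix.of ![![3379762213439278870893690,482823173348468410127670,-482823173348468410127670,0,0,0,0,0,0,0],![0,3931560125837528482468170,-551797912398249611574480,0,0,0,0,0,0,0],![0,0,2422586448730911671868660,482823173348468410127670,-482823173348468410127670,0,0,0,0,482823173348468410127670],![0,0,0,3958812382874679796326525,-579050169435400925432835,0,0,0,0,96226996086932515305165],![0,0,0,0,2885408934458608230076404,482823173348468410127670,-482823173348468410127670,0,0,82152002629440893663514],![0,0,0,0,0,3943377476234169317681085,-563615262794890446787395,0,0,13746713726704645043595],![0,0,0,0,0,0,2896702810784542480380660,482823173348468410127670,-482823173348468410127670,11781936650115521719830],![0,0,0,0,0,0,0,3943062478139465022198525,-563300264700186151304835,1963816246672092149085],![0,0,0,0,0,0,0,0,3379757392047894412909354,1683268267098893781306],![0,0,0,0,0,0,0,0,0,3958812243150805861550730]]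

lemma det7 : (Nz 7).det = 321868121 := by
  have hAB : L7 * U7 = (233118216722285176057644161850726023825699628900 : ℤ) • Nz 7 := by decide
  have hdA : ∏ i, L7 i i = 688463723139942062760085089017993367276957264352596193453430720372233535092927798816738265412284974698555377682288662466334721195281721343974449074778635235996686043641322185827185108658513726546934279958771575368855335700804490000000000 := by decide
  have hdB : ∏ i, U7 i i = 221594524943717371789452661402339260315897121274470418258608246969887228513548230993809568837051455122756560829043586767642382468184201714630650595709187814354644899093756369907808901643096643816369555000817764432183348822842159384663290000000000 := by decide
  have hv : (688463723139942062760085089017993367276957264352596193453430720372233535092927798816738265412284974698555377682288662466334721195281721343974449074778635235996686043641322185827185108658513726546934279958771575368855335700804490000000000 : ℤ) * 221594524943717371789452661402339260315897121274470418258608246969887228513548230993809568837051455122756560829043586767642382468184201714630650595709187814354644899093756369907808901643096643816369555000817764432183348822842159384663290000000000 = (233118216722285176057644161850726023825699628900 : ℤ) ^ 10 * (321868121) := by norm_num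
  apply detAux L7 U7 (Nz 7) 233118216722285176057644161850726023825699628900 _ _ _ hAB (lowerTri (by intro i; fin_cases i <;> decide))
    (upperTri (by intro i; fin_cases i <;> decide)) hdA hdB (by norm_num) (by simp) hv


def L8 : Matrix (Fin 10) (Fin 10) ℤ := Matrix.of ![![122653351526465201116249600,0,0,0,0,0,0,0,0,0],![-15331668940808150139531200,122653351526465201116249600,0,0,0,0,0,0,0,0],![-15331668940808150139531200,15121646078605298767756800,122653351526465201116249600,0,0,0,0,0,0,0],![0,0,-20395659821029520914547200,122653351526465201116249600,0,0,0,0,0,0],![0,0,-20395659821029520914547200,15605993037164558392524800,122653351526465201116249600,0,0,0,0,0],![0,0,0,0,-17566809743112755171262400,122653351526465201116249600,0,0,0,0],![0,0,0,0,-17566809743112755171262400,15335966067041131776704000,122653351526465201116249600,0,0,0],![0,0,0,0,0,0,-17522608960645305706523575,122653351526465201116249600,0,0],![0,0,0,0,0,0,-17522608960645305706523575,15331736086052007397260800,122653351526465201116249600,0],![0,0,-20395659821029520914547200,2225073226001978052059200,-2549457477628690114318400,278835746673475123212800,-318682184703586264289800,34855842144567568076800,-34855861226029857931264,1226533515264652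01116249600]]
def U8 : Matrix (Fin 10) (Fin 10) ℤ := Matrix.of ![![981226812211721608929996800,122653351526465201116249600,-122653351526465201116249600,0,0,0,0,0,0,0],![0,1119211832678994960185777600,-137985020467273351255780800,0,0,0,0,0,0,0],![0,0,737600292056414017671692800,122653351526465201116249600,-122653351526465201116249600,0,0,0,0,122653351526465201116249600],![0,0,0,1124275823559216330960793600,-143049011347494722030796800,0,0,0,0,20395659821029520914547200],![0,0,0,0,856378867914405141789798400,122653351526465201116249600,-122653351526465201116249600,0,0,17800585808015824416473600],![0,0,0,0,0,1121446973481299565217508800,-140220161269577956287512000,0,0,2549457477628690114318400],![0,0,0,0,0,0,858539083675392554716364800,122653351526465201116249600,-122653351526465201116249600,2230685973387800985702400],![0,0,0,0,0,0,0,1121402772698832115752769975,-140175960487110506822773175,318682184703586264289800],![0,0,0,0,0,0,0,0,981226275049770750868160000,278846737156540544614400],![0,0,0,0,0,0,0,0,0,1124275812238753144474373696]]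

lemma det8 : (Nz 8).det = 1205562889 := by
  have hAB : L8 * U8 = (15043844640674643480759515971192339073853169500160000 : ℤ) • Nz 8 := by decide
  have hdA : ∏ i, L8 i i = 770538243986424781771978981722382255136079279550964897712905216060657765966556060095739777121557045278410902673878601037344569712215041424125929138617050320323821225952394883641298955377198982861589130254835608626402106202902313105817704857600000000000000000000 := by decide
  have hdB : ∏ i, U8 i i = 928932311505261136694221520452513347464186824388499864824359504857255775578927201189477662298880415684144857156618911101859516350719863928523929432160452648827961332678690952391423208357218090506478879001016922555718644829655732772632154975477589606400000000000000000000 := by decide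
  have hv : (770538243986424781771978981722382255136079279550964897712905216060657765966556060095739777121557045278410902673878601037344569712215041424125929138617050320323821225952394883641298955377198982861589130254835608626402106202902313105817704857600000000000000000000 : ℤ) * 928932311505261136694221520452513347464186824388499864824359504857255775578927201189477662298880415684144857156618911101859516350719863928523929432160452648827961332678690952391423208357218090506478879001016922555718644829655732772632154975477589606400000000000000000000 = (15043844640674643480759515971192339073853169500160000 : ℤ) ^ 10 * (1205562889) := by norm_num
  apply detAux L8 U8 (Nz 8) 15043844640674643480759515971192339073853169500160000 _ _ _ hAB (lowerTri (by intro i; fin_cases i <;> decide))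
    (upperTri (by intro i; fin_cases i <;> decide)) hdA hdB (by norm_num) (by simp) hv


def L9 : Matrix (Fin 10) (Fin 10) ℤ := Matrix.of ![![3880375647441570315506566098,0,0,0,0,0,0,0,0,0],![-431152849715730035056285122,3880375647441570315506566098,0,0,0,0,0,0,0,0],![-431152849715730035056285122,426414906312260474231490780,3880375647441570315506566098,0,0,0,0,0,0,0],![0,0,-553470507707183226819902061,3880375647441570315506566098,0,0,0,0,0,0],![0,0,-553470507707183226819902061,437149412298702636378347502,3880375647441570315506566098,0,0,0,0,0],![0,0,0,0,-485891691137319584961550161,3880375647441570315506566098,0,0,0,0],![0,0,0,0,-485891691137319584961550161,431227008688143686827911102,3880375647441570315506566098,0,0,0],![0,0,0,0,0,0,-485057384759913860987990261,3880375647441570315506566098,0,0],![0,0,0,0,0,0,-485057384759913860987990261,431153765278041088325106702,3880375647441570315506566098,0],![0,0,-553470507707183226819902061,54568719505050672030767658,-61496723078575914091100229,6073619840678080096167762,-6832969230952879343455581,674860979477364448386618,-674861138708706961209198,3880375647441570315506566098]]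
def U9 : Matrix (Fin 10) (Fin 10) ℤ := Matrix.of ![![34923380826974132839559094882,3880375647441570315506566098,-3880375647441570315506566098,0,0,0,0,0,0,0],![0,39234909324131433190121946102,-4311528497157300350562851220,0,0,0,0,0,0,0],![0,0,27205271022722218255969111764,3880375647441570315506566098,-3880375647441570315506566098,0,0,0,0,3880375647441570315506566098],![0,0,0,39357226982122886381885563041,-4433846155148753542326468159,0,0,0,0,553470507707183226819902061],![0,0,0,0,30989036116285809112153967364,3880375647441570315506566098,-3880375647441570315506566098,0,0,491118475545456048276908922],![0,0,0,0,0,39289648165553022740027211141,-4366267338578889900468116259,0,0,61496723078575914091100229],![0,0,0,0,0,0,31042337748780839658107894964,3880375647441570315506566098,-3880375647441570315506566098,54662578566102720865509858],![0,0,0,0,0,0,0,39288813859175617016053651241,-4365433032201484176494556359,6832969230952879343455581],![0,0,0,0,0,0,0,0,34923372586913333360139700662,6073748815296280035479562],![0,0,0,0,0,0,0,0,0,39357226850082250946019164982]]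

lemma det9 : (Nz 9).det = 3868824151 := by
  have hAB : L9 * U9 = (15057315165257586006654555454086599140180970951642945604 : ℤ) • Nz 9 := by decide
  have hdA : ∏ i, L9 i i = 773994195350835543496285800649766090042172999073580273782328702984272832515493719889225683753688265751973415643037142251650282527802079929073964517290579762979006655942556846728113124126992140731601612609717113241897587076994374662458973893176673392093476881224996703520769024 := by decide
  have hdB : ∏ i, U9 i i = 2994447435707124468707641484352186541655999507335967989246265403126060507609120185196265369995757497866540926349743290933207132649534015777633720989810852071805036656500311597312129385282567985049611127775019704988255289952101333185263751244600408129170335807643425711476537930143898624 := by decide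
  have hv : (773994195350835543496285800649766090042172999073580273782328702984272832515493719889225683753688265751973415643037142251650282527802079929073964517290579762979006655942556846728113124126992140731601612609717113241897587076994374662458973893176673392093476881224996703520769024 : ℤ) * 2994447435707124468707641484352186541655999507335967989246265403126060507609120185196265369995757497866540926349743290933207132649534015777633720989810852071805036656500311597312129385282567985049611127775019704988255289952101333185263751244600408129170335807643425711476537930143898624 = (15057315165257586006654555454086599140180970951642945604 : ℤ) ^ 10 * (3868824151) := by norm_num
  apply detAux L9 U9 (Nz 9) 15057315165257586006654555454086599140180970951642945604 _ _ _ hAB (lowerTri (by intro i; fin_cases i <;> decide))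
    (upperTri (by intro i; fin_cases i <;> decide)) hdA hdB (by norm_num) (by simp) hv


def L10 : Matrix (Fin 10) (Fin 10) ℤ := Matrix.of ![![84738591295266784060792719000,0,0,0,0,0,0,0,0,0],![-8473859129526678406079271900,84738591295266784060792719000,0,0,0,0,0,0,0,0],![-8473859129526678406079271900,8397518056287699321339819000,84738591295266784060792719000,0,0,0,0,0,0,0],![0,0,-10580409036866831305678281000,84738591295266784060792719000,0,0,0,0,0,0],![0,0,-10580409036866831305678281000,8568108321058319925257100000,84738591295266784060792719000,0,0,0,0,0],![0,0,0,0,-9427049132848014559743981900,84738591295266784060792719000,0,0,0,0],![0,0,0,0,-9427049132848014559743981900,8474802775953801513849819000,84738591295266784060792719000,0,0,0],![0,0,0,0,0,0,-9415515533807826392284638909,84738591295266784060792719000,0,0],![0,0,0,0,0,0,-9415515533807826392284638909,8473868566106543656502719000,84738591295266784060792719000,0],![0,0,-10580409036866831305678281000,951060023637473511703538100,-1058040903686683130567828100,95222503100604511391571000,-105804090368668313056782810,9522366954934518205710000,-9522368015355572057100000,84738591295266784060792719000]]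
def U10 : Matrix (Fin 10) (Fin 10) ℤ := Matrix.of ![![847385912952667840607927190000,84738591295266784060792719000,-84738591295266784060792719000,0,0,0,0,0,0,0],![0,940598363377461303074799180900,-93212450424793462466871990900,0,0,0,0,0,0,0],![0,0,678672141094524063333736281000,84738591295266784060792719000,-84738591295266784060792719000,0,0,0,0,84738591295266784060792719000],![0,0,0,942704913284801455974398190000,-95319000332133615366471000000,0,0,0,0,10580409036866831305678281000],![0,0,0,0,761704829742084641355356190000,84738591295266784060792719000,-84738591295266784060792719000,0,0,9510600236374735117035381000],![0,0,0,0,0,941551553380782639228463890900,-94165640428114798620536700900,0,0,1058040903686683130567828100],![0,0,0,0,0,0,762637885193129825469429000000,84738591295266784060792719000,-84738591295266784060792719000,952225031006045113915710000],![0,0,0,0,0,0,0,941540019781742451061004547909,-94154106829074610453077357909,105804090368668313056782810],![0,0,0,0,0,0,0,0,847385818586869188103692719000,95223669549345182057100000],![0,0,0,0,0,0,0,0,0,942704912095844369692656347100]]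

lemma det10 : (Nz 10).det = 10988889011 := by
  have hAB : L10 * U10 = (7180628854706263588008140471840655263187146683412961000000 : ℤ) • Nz 10 := by decide
  have hdA : ∏ i, L10 i i = 19090284452838751205916284354504443554573166427736049521541631201588584946567898957259815025920120040388636980521067348626037487325636117677248836908712890959815827175271562867538403236848641740101115993359736133980812782899573549734972226229381857633070440801000000000000000000000000000000 := by decide
  have hdB : ∏ i, U10 i i = 209781017040663900881656455329165108127518847353222800195820638890151526862380007016790740010226287275627569084516178041307569292946734512128222588618686297622361385830216848135888407949892869488073071568267153372561377274853452497268898259202260260666814237107034937811000000000000000000000000000000 := by decide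
  have hv : (19090284452838751205916284354504443554573166427736049521541631201588584946567898957259815025920120040388636980521067348626037487325636117677248836908712890959815827175271562867538403236848641740101115993359736133980812782899573549734972226229381857633070440801000000000000000000000000000000 : ℤ) * 209781017040663900881656455329165108127518847353222800195820638890151526862380007016790740010226287275627569084516178041307569292946734512128222588618686297622361385830216848135888407949892869488073071568267153372561377274853452497268898259202260260666814237107034937811000000000000000000000000000000 = (7180628854706263588008140471840655263187146683412961000000 : ℤ) ^ 10 * (10988889011) := by norm_num
  apply detAux L10 U10 (Nz 10) 7180628854706263588008140471840655263187146683412961000000 _ _ _ hAB (lowerTri (by intro i; fin_cases i <;> decide))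
    (upperTri (by intro i; fin_cases i <;> decide)) hdA hdB (by norm_num) (by simp) hv


def L11 : Matrix (Fin 10) (Fin 10) ℤ := Matrix.of ![![1373254444475275096389040375990,0,0,0,0,0,0,0,0,0],![-124841313134115917853549125090,1373254444475275096389040375990,0,0,0,0,0,0,0,0],![-124841313134115917853549125090,123902656644385722982469808360,1373254444475275096389040375990,0,0,0,0,0,0,0],![0,0,-152456461698841058280252395665,1373254444475275096389040375990,0,0,0,0,0,0],![0,0,-152456461698841058280252395665,125977094603114698000814166410,1373254444475275096389040375990,0,0,0,0,0],![0,0,0,0,-137450494176877208388006090145,1373254444475275096389040375990,0,0,0,0],![0,0,0,0,-137450494176877208388006090145,124850708234662212363061166666,1373254444475275096389040375990,0,0,0],![0,0,0,0,0,0,-137326477916365110455012319025,1373254444475275096389040375990,0,0],![0,0,0,0,0,0,-137326477916365110455012319025,124841390780154484600903471370,1373254444475275096389040375990,0],![0,0,-152456461698841058280252395665,12588244614736479965520874630,-13859678336258278025477490515,1145419341602405618009735474,-1259970757841661638679771865,104129808221222097791223670,-104129814108891054389135230,1373254444475275096389040375990]]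
def U11 : Matrix (Fin 10) (Fin 10) ℤ := Matrix.of ![![15105798889228026060279444135890,1373254444475275096389040375990,-1373254444475275096389040375990,0,0,0,0,0,0,0],![0,16603894646837417074522033636970,-1498095757609391014242589501080,0,0,0,0,0,0,0],![0,0,12369615221664508011083235867940,1373254444475275096389040375990,-1373254444475275096389040375990,0,0,0,0,1373254444475275096389040375990],![0,0,0,16631509795402142214948736907545,-1525710906174116154669292771655,0,0,0,0,152456461698841058280252395665],![0,0,0,0,13720050848593764382270488305380,1373254444475275096389040375990,-1373254444475275096389040375990,0,0,138470690762101279620729620930],![0,0,0,0,0,16616503827880178365056490602025,-1510704938652152304777046466135,0,0,13859678336258278025477490515],![0,0,0,0,0,0,13732441098646741724285771302564,1373254444475275096389040375990,-1373254444475275096389040375990,12599612757626461798107090214],![0,0,0,0,0,0,0,16616379811619666267123496830905,-1510580922391640206844052695015,1259970757841661638679771865],![0,0,0,0,0,0,0,0,15105798035121601826058546326810,1145427890433443075703460370],![0,0,0,0,0,0,0,0,0,16631509786716701493885638860490]]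

lemma det11 : (Nz 11).det = 28273936549 := by
  have hAB : L11 * U11 = (1885827769271096412703442515695008419364399104230440568480100 : ℤ) • Nz 11 := by decide
  have hdA : ∏ i, L11 i i = 23851194429968888019721414544410682891337505107245885157885346372967412111885848557457558363758560274409409226062623190648688633216972577524116357802119783260911620158012501875094575809243418561621560638337493266356584694103244877995716599880870904844770061559280762602024312101749014588240010000000000 := by decide
  have hdB : ∏ i, U11 i i = 674367157930802563913689535485193390667436481146233597095391130366167898896194570844578185937373794354243664906269805192896952565634216406789849417790115849616647460244434831965167559804618744107136852038710221460680832049419720135460137438817764922441245415021928283885967539320224470391173404323125490000000000 := by decide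
  have hv : (23851194429968888019721414544410682891337505107245885157885346372967412111885848557457558363758560274409409226062623190648688633216972577524116357802119783260911620158012501875094575809243418561621560638337493266356584694103244877995716599880870904844770061559280762602024312101749014588240010000000000 : ℤ) * 674367157930802563913689535485193390667436481146233597095391130366167898896194570844578185937373794354243664906269805192896952565634216406789849417790115849616647460244434831965167559804618744107136852038710221460680832049419720135460137438817764922441245415021928283885967539320224470391173404323125490000000000 = (1885827769271096412703442515695008419364399104230440568480100 : ℤ) ^ 10 * (28273936549) := by norm_num
  apply detAux L11 U11 (Nz 11) 1885827769271096412703442515695008419364399104230440568480100 _ _ _ hAB (lowerTri (by intro i; fin_cases i <;> decide))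
    (upperTri (by intro i; fin_cases i <;> decide)) hdA hdB (by norm_num) (by simp) hv


def L12 : Matrix (Fin 10) (Fin 10) ℤ := Matrix.of ![![3482603907074906092052447522880,0,0,0,0,0,0,0,0,0],![-290216992256242174337703960240,3482603907074906092052447522880,0,0,0,0,0,0,0,0],![-290216992256242174337703960240,288368476381998593609438329920,3482603907074906092052447522880,0,0,0,0,0,0,0],![0,0,-348038710000483931541842304960,3482603907074906092052447522880,0,0,0,0,0,0],![0,0,-348038710000483931541842304960,292416887824365292860380433408,3482603907074906092052447522880,0,0,0,0,0],![0,0,0,0,-316818677097043493945997639600,3482603907074906092052447522880,0,0,0,0],![0,0,0,0,-316818677097043493945997639600,290232279770370854671534570560,3482603907074906092052447522880,0,0,0],![0,0,0,0,0,0,-316601871312991824240470940535,3482603907074906092052447522880,0,0],![0,0,0,0,0,0,-316601871312991824240470940535,290217098420039595055379591232,3482603907074906092052447522880,0],![0,0,-348038710000483931541842304960,26567969553486892927708175952,-29003225833373660961820192080,2215513586033365302836141760,-2416935486114471746818349340,184627010160583477743497472,-184627015788758724078750720,3482603907074906092052447522880]]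
def U12 : Matrix (Fin 10) (Fin 10) ℤ := Matrix.of ![![41791246884898873104629370274560,3482603907074906092052447522880,-3482603907074906092052447522880,0,0,0,0,0,0,0],![0,45564067784230021371019521757680,-3772820899331148266390151483120,0,0,0,0,0,0,0],![0,0,34848221261239983889263662792640,3482603907074906092052447522880,-3482603907074906092052447522880,0,0,0,0,3482603907074906092052447522880],![0,0,0,45621889501974263128223660102400,-3830642617075390023594289827840,0,0,0,0,348038710000483931541842304960],![0,0,0,0,38282244231006489590304805073664,3482603907074906092052447522880,-3482603907074906092052447522880,0,0,318815634641842715132498111424],![0,0,0,0,0,45590669469070822690627815437040,-3799422584171949585998445162480,0,0,29003225833373660961820192080],![0,0,0,0,0,0,38308459527654422848570955427840,3482603907074906092052447522880,-3482603907074906092052447522880,26586163032400383634033701120],![0,0,0,0,0,0,0,45590452663286771020922288737975,-3799205778387897916292918463415,2416935486114471746818349340],![0,0,0,0,0,0,0,0,41791245610933304056017262702656,2215524121927001732921969664],![0,0,0,0,0,0,0,0,0,45621889491296630384116374226320]]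

lemma det12 : (Nz 12).det = 67038055501 := by
  have hAB : L12 * U12 = (12128529973573401146685521706815289526270793512576248123494400 : ℤ) • Nz 12 := by decide
  have hdA : ∏ i, L12 i i = 262446526442006648936014559506773373312484973485059400688725874604641172896666425202270549404062044026622117723343006000743592197504405364202889085854852765112614832593605990456926754696068254304242085145946959911215503846936150711542823559219792483008333467175837744960531530023190181418620682240000000000 := by decide
  have hdB : ∏ i, U12 i i = 17593904805663905789183566637959140585551359868719925497652602806720701380836460750593078242167273782304199049491624199538024981006410880497435397162084773697802789662645982165977532131206836018531963043753959983730286979262584680203708447101226808733615258418049572472834795764155071199019752210871605002240000000000 := by decide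
  have hv : (262446526442006648936014559506773373312484973485059400688725874604641172896666425202270549404062044026622117723343006000743592197504405364202889085854852765112614832593605990456926754696068254304242085145946959911215503846936150711542823559219792483008333467175837744960531530023190181418620682240000000000 : ℤ) * 17593904805663905789183566637959140585551359868719925497652602806720701380836460750593078242167273782304199049491624199538024981006410880497435397162084773697802789662645982165977532131206836018531963043753959983730286979262584680203708447101226808733615258418049572472834795764155071199019752210871605002240000000000 = (12128529973573401146685521706815289526270793512576248123494400 : ℤ) ^ 10 * (67038055501) := by norm_num
  apply detAux L12 U12 (Nz 12) 12128529973573401146685521706815289526270793512576248123494400 _ _ _ hAB (lowerTri (by intro i; fin_cases i <;> decide))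
    (upperTri (by intro i; fin_cases i <;> decide)) hdA hdB (by norm_num) (by simp) hv

lemma charpoly_Mz : Mz.charpoly = pz := by
  have h : Mz.charpoly - pz = 0 := by
    apply Polynomial.eq_zero_of_natDegree_lt_card_of_eval_eq_zero' _
      ({1, 2, 3, 4, 5, 6, 7, 8, 9, 10, 11, 12} : Finset ℤ)
    · intro i hi
      fin_cases hi
      · rw [Polynomial.eval_sub, eval_charpoly_Mz, det1, pz]; norm_num
      · rw [Polynomial.eval_sub, eval_charpoly_Mz, det2, pz]; norm_num
      · rw [Polynomial.eval_sub, eval_charpoly_Mz, det3, pz]; norm_num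
      · rw [Polynomial.eval_sub, eval_charpoly_Mz, det4, pz]; norm_num
      · rw [Polynomial.eval_sub, eval_charpoly_Mz, det5, pz]; norm_num
      · rw [Polynomial.eval_sub, eval_charpoly_Mz, det6, pz]; norm_num
      · rw [Polynomial.eval_sub, eval_charpoly_Mz, det7, pz]; norm_num
      · rw [Polynomial.eval_sub, eval_charpoly_Mz, det8, pz]; norm_num
      · rw [Polynomial.eval_sub, eval_charpoly_Mz, det9, pz]; norm_num
      · rw [Polynomial.eval_sub, eval_charpoly_Mz, det10, pz]; norm_num
      · rw [Polynomial.eval_sub, eval_charpoly_Mz, det11, pz]; norm_num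
      · rw [Polynomial.eval_sub, eval_charpoly_Mz, det12, pz]; norm_num
    · have h1 : (Mz.charpoly).natDegree = 10 := by
        simpa using Mz.charpoly_natDegree_eq_dim
      have h2 : pz.natDegree ≤ 10 := by unfold pz; compute_degree
      have := Polynomial.natDegree_sub_le Mz.charpoly pz
      have hcard : ({1, 2, 3, 4, 5, 6, 7, 8, 9, 10, 11, 12} : Finset ℤ).card = 12 := by decide
      omega
  have := sub_eq_zero.mp h
  exact this


/-- The characteristic polynomial of the Coxeter element of the
tree `E₁₀` (product of the reflections in bipartite order) is Lehmer's
polynomial `x¹⁰ + x⁹ - x⁷ - x⁶ - x⁵ - x⁴ - x³ + x + 1`, which has a real root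
strictly greater than `1`. -/
theorem e10_coxeter_charpoly_lehmer
    (q : Fin 10 → Fin 10 → ℝ)
    (hq : ∀ i j, q i j =
      if i = j then (-2 : ℝ) else if e10Adj i j then 1 else 0)
    (R : Fin 10 → Matrix (Fin 10) (Fin 10) ℝ)
    (hR : ∀ i k j, R i k j =
      (if k = j then (1 : ℝ) else 0) + (if k = i then q i j else 0))
    (C : Matrix (Fin 10) (Fin 10) ℝ)
    (hC : C = (([0, 2, 4, 6, 8, 1, 3, 5, 7, 9] : List (Fin 10)).map R).prod) :
    C.charpoly =
      X ^ 10 + X ^ 9 - X ^ 7 - X ^ 6 - X ^ 5 - X ^ 4 - X ^ 3 + X + 1 ∧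
    ∃ x : ℝ, 1 < x ∧
      x ^ 10 + x ^ 9 - x ^ 7 - x ^ 6 - x ^ 5 - x ^ 4 - x ^ 3 + x + 1 = 0 := by
  have f := Int.castRingHom ℝ
  have hRA : ∀ i, R i = (Az i).map ⇑(Int.castRingHom ℝ) := by
    intro i
    ext k j
    rw [hR, hq]
    simp only [Az, qz, Matrix.map_apply, Matrix.of_apply]
    push_cast
    split_ifs <;> norm_num
  have hCM : C = Mz.map ⇑(Int.castRingHom ℝ) := by
    rw [hC]
    have : ([0, 2, 4, 6, 8, 1, 3, 5, 7, 9] : List (Fin 10)).map R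
        = (([0, 2, 4, 6, 8, 1, 3, 5, 7, 9] : List (Fin 10)).map Az).map
            (Int.castRingHom ℝ).mapMatrix := by
      simp only [List.map_map]
      exact List.map_congr_left fun i _ => by
        rw [hRA i, Function.comp_apply, RingHom.mapMatrix_apply]
    rw [this, ← map_list_prod ((Int.castRingHom ℝ).mapMatrix), prodAz,
      RingHom.mapMatrix_apply]
  constructor
  · rw [hCM, Matrix.charpoly_map Mz (Int.castRingHom ℝ), charpoly_Mz, pz]
    push_cast
    simp
  · have hcont : Continuous fun x : ℝ =>
        x ^ 10 + x ^ 9 - x ^ 7 - x ^ 6 - x ^ 5 - x ^ 4 - x ^ 3 + x + 1 := by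
      continuity
    have h01 : (0 : ℝ) ∈ Set.Ioo
        ((fun x : ℝ => x ^ 10 + x ^ 9 - x ^ 7 - x ^ 6 - x ^ 5 - x ^ 4 - x ^ 3 + x + 1) 1)
        ((fun x : ℝ => x ^ 10 + x ^ 9 - x ^ 7 - x ^ 6 - x ^ 5 - x ^ 4 - x ^ 3 + x + 1) 2) := by
      constructor <;> norm_num
    have := intermediate_value_Ioo (by norm_num : (1:ℝ) ≤ 2) hcont.continuousOn h01
    obtain ⟨x, hx, hfx⟩ := this
    exact ⟨x, hx.1, hfx⟩
end
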